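/- In the balanced packing constructed from a valid Partition solution, the offsets O_j between start times of the first microbatch on consecutive odd packs satisfy |O_j − 8A| ≤ B·Σ_{i=1}^{(j−3)/2} a_i ≤ A/2 for j = 3, 5, …, 2n+3, given A = 6·Σ_{i=1}^n a_i and B = 3. -/

import Mathlib

/-! **Statement 7.**
In the balanced packing constructed from a valid Partition solution `X`, the
offsets `O_j` between start times of the first microbatch on consecutive odd
packs satisfy `|O_j − 8A| ≤ B·∑_{i=1}^{(j−3)/2} aᵢ ≤ A/2` for
`j = 3, 5, …, 2n+3`, given `A = 6·∑_{i=1}^n aᵢ` and `B = 3` (and `G = 2`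
GPUs with round-robin assignment). -/

/-! Core model of the Harmony round-robin pipelined scheduling problem. -/

namespace Harmony

/-- A layer is a pair `(processing time, weight size)`. -/
abbrev Layer := ℕ × ℕ

/-- A packing of the layer list `L` into contiguous packs is given by the list
of pack sizes `ss` (each positive, summing to the number of layers). -/
def validPacking (L : List Layer) (ss : List ℕ) : Prop :=
  (∀ s ∈ ss, 0 < s) ∧ ss.sum = L.length

/-- The `j`-th pack (0-indexed) of the packing of `L` described by sizes `ss`. -/
def pack (L : List Layer) (ss : List ℕ) (j : ℕ) : List Layer :=
  (L.drop ((ss.take j).sum)).take (ss.getD j 0)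

/-- Processing time of the `j`-th pack (per microbatch). -/
def packTime (L : List Layer) (ss : List ℕ) (j : ℕ) : ℕ :=
  ((pack L ss j).map Prod.fst).sum

/-- Total weight size of the `j`-th pack. -/
def packMem (L : List Layer) (ss : List ℕ) (j : ℕ) : ℕ :=
  ((pack L ss j).map Prod.snd).sum

/-- A packing is feasible if it is a valid packing and the weights of every
pack fit in GPU memory `M`. -/
def feasible (L : List Layer) (M : ℕ) (ss : List ℕ) : Prop :=
  validPacking L ss ∧ ∀ j < ss.length, packMem L ss j ≤ M

/-- Finish time of microbatch `b` (0-indexed) on pack `j` (0-indexed), for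
round-robin assignment of packs to `G` GPUs with `B` microbatches and
per-microbatch processing times `pt`.  Pack `j` runs on GPU `j % G`; each
pack processes its microbatches in order, and microbatch `b` of pack `j`
starts at the earliest time when its GPU is idle (i.e. after the previous
task scheduled on that GPU) and microbatch `b` is done on pack `j-1`. -/
def finish (pt : ℕ → ℕ) (G B : ℕ) (j b : ℕ) : ℕ :=
  -- time at which the GPU hosting pack `j` becomes idle
  let gpuIdle : ℕ :=
    if hb : b = 0 then
      if hj : G ≤ j ∧ 0 < G then finish pt G B (j - G) (B - 1) else 0
    else finish pt G B j (b - 1)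
  -- time at which microbatch `b` is done on the previous pack
  let dep : ℕ := if hj0 : j = 0 then 0 else finish pt G B (j - 1) b
  max gpuIdle dep + pt j
termination_by j * (B + 1) + b
decreasing_by
  · obtain ⟨h1, h2⟩ := hj
    have h3 : (j - G) * (B + 1) ≤ (j - 1) * (B + 1) :=
      Nat.mul_le_mul_right _ (by omega)
    have h4 : (j - 1) * (B + 1) = j * (B + 1) - (B + 1) := by
      rw [Nat.sub_one_mul]
    have h5 : 1 * (B + 1) ≤ j * (B + 1) := Nat.mul_le_mul_right _ (by omega)
    omega
  · omega
  · have h4 : (j - 1) * (B + 1) = j * (B + 1) - (B + 1) := by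
      rw [Nat.sub_one_mul]
    have h5 : 1 * (B + 1) ≤ j * (B + 1) :=
      Nat.mul_le_mul_right _ (Nat.one_le_iff_ne_zero.mpr hj0)
    omega

/-- Makespan of a packing: the finish time of the last microbatch on the
last pack. -/
def makespan (L : List Layer) (G B : ℕ) (ss : List ℕ) : ℕ :=
  finish (packTime L ss) G B (ss.length - 1) (B - 1)

end Harmony

namespace Harmony

/-! The reduction from Partition.  Given positive integers `a 1, …, a n`, the
reduction outputs the instance with `B = 3`, `G = 2`, `M = 7` and `3n + 4`
layers: layers `1, 2, 3n+3, 3n+4` have processing time `8A` and weight `6`;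
for each `i = 1, …, n`, layers `3i` and `3i+2` have time `5A` and weight `4`,
and layer `3i+1` has time `aᵢ` and weight `2`, where `A = 6·∑ᵢ aᵢ`.
(Layers are 1-indexed as in the paper; position `p` in the list is layer
`p + 1`.) -/

/-- The large processing-time quantity `A = 6·∑_{i=1}^n aᵢ`. -/
def bigA (a : ℕ → ℕ) (n : ℕ) : ℕ := 6 * ∑ i ∈ Finset.Icc 1 n, a i

/-- The list of layers `(time, weight)` output by the reduction. -/
def redLayers (a : ℕ → ℕ) (n : ℕ) : List Layer :=
  [(8 * bigA a n, 6), (8 * bigA a n, 6)]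
    ++ (List.range n).flatMap
        (fun i => [(5 * bigA a n, 4), (a (i + 1), 2), (5 * bigA a n, 4)])
    ++ [(8 * bigA a n, 6), (8 * bigA a n, 6)]

/-- Positions `p` and `q` (0-indexed) lie in the same pack of the packing
with sizes `ss`. -/
def samePack (ss : List ℕ) (p q : ℕ) : Prop :=
  ∃ j < ss.length,
    (ss.take j).sum ≤ p ∧ p < (ss.take (j + 1)).sum ∧
    (ss.take j).sum ≤ q ∧ q < (ss.take (j + 1)).sum

open scoped Classical in
/-- The subset `X = {i : layer 3i+1 is packed together with layer 3i}`
corresponding to a packing (layer `3i+1` is at position `3i`, layer `3i` at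
position `3i - 1`). -/
noncomputable def XOf (ss : List ℕ) (n : ℕ) : Finset ℕ :=
  (Finset.Icc 1 n).filter fun i => samePack ss (3 * i - 1) (3 * i)

/-- The target makespan
`T = (3·(32A + ∑_{i=1}^n (10A + aᵢ)) + 16A) / 2`. -/
def targetT (a : ℕ → ℕ) (n : ℕ) : ℕ :=
  (3 * (32 * bigA a n + ∑ i ∈ Finset.Icc 1 n, (10 * bigA a n + a i))
    + 16 * bigA a n) / 2

end Harmony

namespace Harmony

/-- Start time of microbatch `b` on pack `j` (0-indexed). -/
def startTime (L : List Layer) (ss : List ℕ) (G B j b : ℕ) : ℕ :=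
  finish (packTime L ss) G B j b - packTime L ss j

/-- The packing of the reduction instance constructed from a Partition
solution `X ⊆ {1,…,n}`: the first two and last two layers form singleton
packs, and for each `i`, if `i ∈ X` the packs `{3i, 3i+1}, {3i+2}` are
formed, and otherwise `{3i}, {3i+1, 3i+2}`. -/
def balancedPacking (X : Finset ℕ) (n : ℕ) : List ℕ :=
  [1, 1] ++ (List.range n).flatMap (fun i => if (i + 1) ∈ X then [2, 1] else [1, 2])
    ++ [1, 1]

/-- `O_j` (for a 1-indexed pack number `j`): the difference between the start
times of microbatch 1 on pack `j+1` and on pack `j`.  1-indexed pack `j`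
corresponds to 0-indexed pack `j - 1`, and microbatch 1 to index `0`. -/
noncomputable def offsetO (a : ℕ → ℕ) (n : ℕ) (X : Finset ℕ) (j : ℕ) : ℤ :=
  (startTime (redLayers a n) (balancedPacking X n) 2 3 j 0 : ℤ)
    - (startTime (redLayers a n) (balancedPacking X n) 2 3 (j - 1) 0 : ℤ)

/-- size block for index `i` (0-based). -/
def sbD (X : Finset ℕ) (i : ℕ) : List ℕ := if (i + 1) ∈ X then [2, 1] else [1, 2]

/-- layer block for index `i` (0-based). -/
def lbD (a : ℕ → ℕ) (n : ℕ) (i : ℕ) : List Layer :=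
  [(5 * bigA a n, 4), (a (i + 1), 2), (5 * bigA a n, 4)]

lemma ss_drop (a : ℕ → ℕ) (n : ℕ) (X : Finset ℕ) :
    ∀ t, t ≤ n → (balancedPacking X n).drop (2 + 2 * t)
      = (List.range' t (n - t)).flatMap (sbD X) ++ [1, 1] := by
  intro t
  induction t with
  | zero =>
    intro _
    simp only [Nat.mul_zero, Nat.add_zero, Nat.sub_zero, balancedPacking, List.cons_append, List.nil_append, List.drop_succ_cons, List.drop_zero, List.range_eq_range']
    rfl
  | succ t ih =>
    intro ht
    have h1 : 2 + 2 * (t + 1) = (2 + 2 * t) + 2 := by ring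
    rw [h1, ← List.drop_drop, ih (by omega)]
    have h2 : n - t = (n - (t + 1)) + 1 := by omega
    rw [h2, List.range'_succ]
    by_cases hx : (t + 1) ∈ X <;> simp [sbD, hx]

lemma ss_take_sum (a : ℕ → ℕ) (n : ℕ) (X : Finset ℕ) :
    ∀ t, t ≤ n → ((balancedPacking X n).take (2 + 2 * t)).sum = 2 + 3 * t := by
  intro t
  induction t with
  | zero => intro _; simp [balancedPacking]
  | succ t ih =>
    intro ht
    have h1 : 2 + 2 * (t + 1) = (2 + 2 * t) + 2 := by ring
    rw [h1, List.take_add, List.sum_append, ih (by omega), ss_drop a n X t (by omega)]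
    have h2 : n - t = (n - (t + 1)) + 1 := by omega
    rw [h2, List.range'_succ]
    by_cases hx : (t + 1) ∈ X <;> simp [sbD, hx] <;> ring

lemma L_drop (a : ℕ → ℕ) (n : ℕ) (X : Finset ℕ) :
    ∀ t, t ≤ n → (redLayers a n).drop (2 + 3 * t)
      = (List.range' t (n - t)).flatMap (lbD a n)
          ++ [(8 * bigA a n, 6), (8 * bigA a n, 6)] := by
  intro t
  induction t with
  | zero =>
    intro _
    simp only [Nat.mul_zero, Nat.add_zero, Nat.sub_zero, redLayers, List.cons_append, List.nil_append, List.drop_succ_cons, List.drop_zero, List.range_eq_range']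
    rfl
  | succ t ih =>
    intro ht
    have h1 : 2 + 3 * (t + 1) = (2 + 3 * t) + 3 := by ring
    rw [h1, ← List.drop_drop, ih (by omega)]
    have h2 : n - t = (n - (t + 1)) + 1 := by omega
    rw [h2, List.range'_succ]
    simp [lbD]

lemma getD_of_drop (l : List ℕ) (j x : ℕ) (rest : List ℕ) (h : l.drop j = x :: rest) :
    l.getD j 0 = x := by
  rw [List.getD_eq_getElem?_getD, ← Nat.add_zero j, ← List.getElem?_drop, h]
  simp

def epsD (a : ℕ → ℕ) (X : Finset ℕ) (i : ℕ) : ℕ := if i ∈ X then a i else 0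
def delD (a : ℕ → ℕ) (X : Finset ℕ) (i : ℕ) : ℕ := if i ∈ X then 0 else a i

lemma getD_eq_sum (l : List ℕ) (j : ℕ) : l.getD j 0 = ((l.drop j).take 1).sum := by
  rw [List.getD_eq_getElem?_getD, ← Nat.add_zero j, ← List.getElem?_drop]
  cases h : l.drop j <;> simp [h]

lemma drop_add' {α : Type*} (l : List α) (j k : ℕ) :
    l.drop (j + k) = (l.drop j).drop k := List.drop_drop.symm

lemma ss_drop' (a : ℕ → ℕ) (n : ℕ) (X : Finset ℕ) (t : ℕ) (ht : t < n) :
    (balancedPacking X n).drop (2 + 2 * t)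
      = sbD X t ++ ((List.range' (t + 1) (n - t - 1)).flatMap (sbD X) ++ [1, 1]) := by
  rw [ss_drop a n X t (by omega), show n - t = (n - t - 1) + 1 by omega, List.range'_succ]
  simp

lemma L_drop' (a : ℕ → ℕ) (n : ℕ) (X : Finset ℕ) (t : ℕ) (ht : t < n) :
    (redLayers a n).drop (2 + 3 * t)
      = (5 * bigA a n, 4) :: (a (t + 1), 2) :: (5 * bigA a n, 4) ::
          ((List.range' (t + 1) (n - t - 1)).flatMap (lbD a n)
            ++ [(8 * bigA a n, 6), (8 * bigA a n, 6)]) := by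
  rw [L_drop a n X t (by omega), show n - t = (n - t - 1) + 1 by omega, List.range'_succ]
  simp [lbD]

lemma pt0 (a : ℕ → ℕ) (n : ℕ) (X : Finset ℕ) :
    packTime (redLayers a n) (balancedPacking X n) 0 = 8 * bigA a n := by
  simp [packTime, pack, redLayers, balancedPacking, List.getD]

lemma pt1 (a : ℕ → ℕ) (n : ℕ) (X : Finset ℕ) :
    packTime (redLayers a n) (balancedPacking X n) 1 = 8 * bigA a n := by
  simp [packTime, pack, redLayers, balancedPacking, List.getD]

lemma ptE (a : ℕ → ℕ) (n : ℕ) (X : Finset ℕ) (t : ℕ) (ht : t < n) :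
    packTime (redLayers a n) (balancedPacking X n) (2 * t + 2)
      = 5 * bigA a n + epsD a X (t + 1) := by
  unfold packTime pack
  rw [show 2 * t + 2 = 2 + 2 * t by ring, ss_take_sum a n X t (by omega),
    getD_eq_sum, ss_drop' a n X t ht, L_drop' a n X t ht]
  by_cases hx : (t + 1) ∈ X <;> simp [sbD, epsD, hx, Nat.add_comm]

lemma ptO (a : ℕ → ℕ) (n : ℕ) (X : Finset ℕ) (t : ℕ) (ht : t < n) :
    packTime (redLayers a n) (balancedPacking X n) (2 * t + 3)
      = 5 * bigA a n + delD a X (t + 1) := by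
  unfold packTime pack
  rw [show 2 * t + 3 = (2 + 2 * t) + 1 by ring, List.take_add, List.sum_append,
    ss_take_sum a n X t (by omega), getD_eq_sum, drop_add' _ (2 + 2 * t) 1,
    ss_drop' a n X t ht]
  by_cases hx : (t + 1) ∈ X
  · have h1 : List.take 1 (sbD X t ++ ((List.range' (t + 1) (n - t - 1)).flatMap (sbD X)
        ++ [1, 1])) = [2] := by simp [sbD, hx]
    rw [h1]
    rw [show (2 : ℕ) + 3 * t + [(2:ℕ)].sum = (2 + 3 * t) + 2 by simp,
      drop_add' _ (2 + 3 * t) 2, L_drop' a n X t ht]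
    simp [sbD, delD, hx, Nat.add_comm]
  · have h1 : List.take 1 (sbD X t ++ ((List.range' (t + 1) (n - t - 1)).flatMap (sbD X)
        ++ [1, 1])) = [1] := by simp [sbD, hx]
    rw [h1]
    rw [show (2 : ℕ) + 3 * t + [(1:ℕ)].sum = (2 + 3 * t) + 1 by simp,
      drop_add' _ (2 + 3 * t) 1, L_drop' a n X t ht]
    simp [sbD, delD, hx, Nat.add_comm]

lemma ptn2 (a : ℕ → ℕ) (n : ℕ) (X : Finset ℕ) :
    packTime (redLayers a n) (balancedPacking X n) (2 * n + 2) = 8 * bigA a n := by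
  unfold packTime pack
  rw [show 2 * n + 2 = 2 + 2 * n by ring, ss_take_sum a n X n le_rfl,
    getD_eq_sum, ss_drop a n X n le_rfl, L_drop a n X n le_rfl]
  simp

lemma ptn3 (a : ℕ → ℕ) (n : ℕ) (X : Finset ℕ) :
    packTime (redLayers a n) (balancedPacking X n) (2 * n + 3) = 8 * bigA a n := by
  unfold packTime pack
  rw [show 2 * n + 3 = (2 + 2 * n) + 1 by ring, List.take_add, List.sum_append,
    ss_take_sum a n X n le_rfl, getD_eq_sum, drop_add' _ (2 + 2 * n) 1,
    ss_drop a n X n le_rfl]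
  have h1 : List.take 1 ((List.range' n (n - n)).flatMap (sbD X) ++ [1, 1]) = [1] := by simp
  rw [h1]
  rw [show (2 : ℕ) + 3 * n + [(1:ℕ)].sum = (2 + 3 * n) + 1 by simp,
    drop_add' _ (2 + 3 * n) 1, L_drop a n X n le_rfl]
  simp

/-- Abbreviation for the finish times of the balanced packing schedule. -/
def FD (a : ℕ → ℕ) (n : ℕ) (X : Finset ℕ) (j b : ℕ) : ℕ :=
  finish (packTime (redLayers a n) (balancedPacking X n)) 2 3 j b

lemma FD_eq (a : ℕ → ℕ) (n : ℕ) (X : Finset ℕ) (j b : ℕ) :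
    FD a n X j b =
      max (if b = 0 then (if 2 ≤ j then FD a n X (j - 2) 2 else 0)
           else FD a n X j (b - 1))
        (if j = 0 then 0 else FD a n X (j - 1) b)
        + packTime (redLayers a n) (balancedPacking X n) j := by
  unfold FD
  rw [finish]
  simp only [dite_eq_ite]
  norm_num

lemma eps_add_del (a : ℕ → ℕ) (X : Finset ℕ) (i : ℕ) :
    epsD a X i + delD a X i = a i := by
  unfold epsD delD; split <;> simp

lemma sum_eps_del (a : ℕ → ℕ) (n : ℕ) (X : Finset ℕ) (k : ℕ) (hk : k ≤ n) :
    (∑ i ∈ Finset.Icc 1 k, epsD a X i) + (∑ i ∈ Finset.Icc 1 k, delD a X i)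
      ≤ ∑ i ∈ Finset.Icc 1 n, a i := by
  rw [← Finset.sum_add_distrib]
  calc (∑ i ∈ Finset.Icc 1 k, (epsD a X i + delD a X i))
      = ∑ i ∈ Finset.Icc 1 k, a i := by
        exact Finset.sum_congr rfl fun i _ => eps_add_del a X i
    _ ≤ ∑ i ∈ Finset.Icc 1 n, a i :=
        Finset.sum_le_sum_of_subset (Finset.Icc_subset_Icc le_rfl hk)

lemma eps_del_single (a : ℕ → ℕ) (n : ℕ) (X : Finset ℕ) (i : ℕ)
    (h1 : 1 ≤ i) (h2 : i ≤ n) :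
    epsD a X i + delD a X i ≤ ∑ i ∈ Finset.Icc 1 n, a i := by
  rw [eps_add_del]
  exact Finset.single_le_sum (f := a) (fun _ _ => Nat.zero_le _)
    (Finset.mem_Icc.mpr ⟨h1, h2⟩)

lemma F00 (a : ℕ → ℕ) (n : ℕ) (X : Finset ℕ) :
    FD a n X 0 0 = 8 * bigA a n := by
  rw [FD_eq]; norm_num [pt0]

lemma F01 (a : ℕ → ℕ) (n : ℕ) (X : Finset ℕ) :
    FD a n X 0 1 = 16 * bigA a n := by
  rw [FD_eq]; norm_num [pt0, F00]; omega

lemma F02 (a : ℕ → ℕ) (n : ℕ) (X : Finset ℕ) :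
    FD a n X 0 2 = 24 * bigA a n := by
  rw [FD_eq]; norm_num [pt0, F01]; omega

lemma F10 (a : ℕ → ℕ) (n : ℕ) (X : Finset ℕ) :
    FD a n X 1 0 = 16 * bigA a n := by
  rw [FD_eq]; norm_num [pt1, F00]; omega

lemma F11 (a : ℕ → ℕ) (n : ℕ) (X : Finset ℕ) :
    FD a n X 1 1 = 24 * bigA a n := by
  rw [FD_eq]; norm_num [pt1, F10, F01]; omega

lemma F12 (a : ℕ → ℕ) (n : ℕ) (X : Finset ℕ) :
    FD a n X 1 2 = 32 * bigA a n := by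
  rw [FD_eq]; norm_num [pt1, F11, F02]; omega

lemma FD_eq0 (a : ℕ → ℕ) (n : ℕ) (X : Finset ℕ) (j : ℕ) (hj : 2 ≤ j) :
    FD a n X j 0 = max (FD a n X (j - 2) 2) (FD a n X (j - 1) 0)
      + packTime (redLayers a n) (balancedPacking X n) j := by
  rw [FD_eq]
  rw [if_pos rfl, if_pos hj, if_neg (by omega : ¬ j = 0)]

lemma FD_eqs (a : ℕ → ℕ) (n : ℕ) (X : Finset ℕ) (j b : ℕ) (hj : j ≠ 0) (hb : b ≠ 0) :
    FD a n X j b = max (FD a n X j (b - 1)) (FD a n X (j - 1) b)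
      + packTime (redLayers a n) (balancedPacking X n) j := by
  rw [FD_eq]
  rw [if_neg hb, if_neg hj]

set_option maxHeartbeats 1000000 in
lemma mainF (a : ℕ → ℕ) (n : ℕ) (X : Finset ℕ) :
    ∀ t, t < n →
      (FD a n X (2 * t + 2) 0
          = 24 * bigA a n + 15 * t * bigA a n + 3 * (∑ i ∈ Finset.Icc 1 t, epsD a X i)
            + 1 * (5 * bigA a n + epsD a X (t + 1))) ∧
      (FD a n X (2 * t + 2) 1
          = 24 * bigA a n + 15 * t * bigA a n + 3 * (∑ i ∈ Finset.Icc 1 t, epsD a X i)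
            + 2 * (5 * bigA a n + epsD a X (t + 1))) ∧
      (FD a n X (2 * t + 2) 2
          = 24 * bigA a n + 15 * t * bigA a n + 3 * (∑ i ∈ Finset.Icc 1 t, epsD a X i)
            + 3 * (5 * bigA a n + epsD a X (t + 1))) ∧
      (FD a n X (2 * t + 3) 0
          = 32 * bigA a n + 15 * t * bigA a n + 3 * (∑ i ∈ Finset.Icc 1 t, delD a X i)
            + 1 * (5 * bigA a n + delD a X (t + 1))) ∧
      (FD a n X (2 * t + 3) 1
          = 32 * bigA a n + 15 * t * bigA a n + 3 * (∑ i ∈ Finset.Icc 1 t, delD a X i)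
            + 2 * (5 * bigA a n + delD a X (t + 1))) ∧
      (FD a n X (2 * t + 3) 2
          = 32 * bigA a n + 15 * t * bigA a n + 3 * (∑ i ∈ Finset.Icc 1 t, delD a X i)
            + 3 * (5 * bigA a n + delD a X (t + 1))) := by
  have hA : bigA a n = 6 * ∑ i ∈ Finset.Icc 1 n, a i := rfl
  intro t
  induction t with
  | zero =>
    intro h0
    have hS1 := eps_del_single a n X 1 le_rfl (by omega)
    have hpt2 : packTime (redLayers a n) (balancedPacking X n) 2
        = 5 * bigA a n + epsD a X 1 := by
      have := ptE a n X 0 h0; norm_num at this; exact this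
    have hpt3 : packTime (redLayers a n) (balancedPacking X n) 3
        = 5 * bigA a n + delD a X 1 := by
      have := ptO a n X 0 h0; norm_num at this; exact this
    have e0 : (∑ i ∈ Finset.Icc 1 0, epsD a X i) = 0 := by simp
    have d0 : (∑ i ∈ Finset.Icc 1 0, delD a X i) = 0 := by simp
    have h20 : FD a n X 2 0 = 24 * bigA a n + (5 * bigA a n + epsD a X 1) := by
      rw [FD_eq0 a n X 2 le_rfl]
      norm_num [F02, F10, hpt2]
    have h21 : FD a n X 2 1
        = 24 * bigA a n + 2 * (5 * bigA a n + epsD a X 1) := by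
      rw [FD_eqs a n X 2 1 (by omega) (by omega)]
      norm_num [h20, F11, hpt2]
      omega
    have h22 : FD a n X 2 2
        = 24 * bigA a n + 3 * (5 * bigA a n + epsD a X 1) := by
      rw [FD_eqs a n X 2 2 (by omega) (by omega)]
      norm_num [h21, F12, hpt2]
      omega
    have h30 : FD a n X 3 0 = 32 * bigA a n + (5 * bigA a n + delD a X 1) := by
      rw [FD_eq0 a n X 3 (by omega)]
      norm_num [F12, h20, hpt3]
      omega
    have h31 : FD a n X 3 1
        = 32 * bigA a n + 2 * (5 * bigA a n + delD a X 1) := by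
      rw [FD_eqs a n X 3 1 (by omega) (by omega)]
      norm_num [h30, h21, hpt3]
      omega
    have h32 : FD a n X 3 2
        = 32 * bigA a n + 3 * (5 * bigA a n + delD a X 1) := by
      rw [FD_eqs a n X 3 2 (by omega) (by omega)]
      norm_num [h31, h22, hpt3]
      omega
    refine ⟨?_, ?_, ?_, ?_, ?_, ?_⟩ <;> norm_num [e0, d0] <;> omega
  | succ t ih =>
    intro ht
    obtain ⟨i20, i21, i22, i30, i31, i32⟩ := ih (by omega)
    have hSS : (∑ i ∈ Finset.Icc 1 t, epsD a X i) + (∑ i ∈ Finset.Icc 1 t, delD a X i)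
        + epsD a X (t + 1) + delD a X (t + 1) + epsD a X (t + 2) + delD a X (t + 2)
        ≤ ∑ i ∈ Finset.Icc 1 n, a i := by
      have h1 := sum_eps_del a n X (t + 2) (by omega)
      rw [Finset.sum_Icc_succ_top (by omega : 1 ≤ t + 2) (epsD a X),
        Finset.sum_Icc_succ_top (by omega : 1 ≤ t + 1) (epsD a X),
        Finset.sum_Icc_succ_top (by omega : 1 ≤ t + 2) (delD a X),
        Finset.sum_Icc_succ_top (by omega : 1 ≤ t + 1) (delD a X)] at h1
      rw [show t + 1 + 1 = t + 2 by omega] at h1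
      omega
    have hp4 : packTime (redLayers a n) (balancedPacking X n) (2 * t + 4)
        = 5 * bigA a n + epsD a X (t + 2) := by
      have := ptE a n X (t + 1) ht
      rw [show 2 * (t + 1) + 2 = 2 * t + 4 by ring, show t + 1 + 1 = t + 2 by ring] at this
      exact this
    have hp5 : packTime (redLayers a n) (balancedPacking X n) (2 * t + 5)
        = 5 * bigA a n + delD a X (t + 2) := by
      have := ptO a n X (t + 1) ht
      rw [show 2 * (t + 1) + 3 = 2 * t + 5 by ring, show t + 1 + 1 = t + 2 by ring] at this
      exact this
    have g40 : FD a n X (2 * t + 4) 0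
        = 24 * bigA a n + (15 * t * bigA a n + 15 * bigA a n)
          + 3 * ((∑ i ∈ Finset.Icc 1 t, epsD a X i) + epsD a X (t + 1))
          + 1 * (5 * bigA a n + epsD a X (t + 2)) := by
      rw [FD_eq0 a n X (2 * t + 4) (by omega),
        show 2 * t + 4 - 2 = 2 * t + 2 by omega,
        show 2 * t + 4 - 1 = 2 * t + 3 by omega, i22, i30, hp4]
      omega
    have g41 : FD a n X (2 * t + 4) 1
        = 24 * bigA a n + (15 * t * bigA a n + 15 * bigA a n)
          + 3 * ((∑ i ∈ Finset.Icc 1 t, epsD a X i) + epsD a X (t + 1))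
          + 2 * (5 * bigA a n + epsD a X (t + 2)) := by
      rw [FD_eqs a n X (2 * t + 4) 1 (by omega) (by omega),
        show (1:ℕ) - 1 = 0 by omega,
        show 2 * t + 4 - 1 = 2 * t + 3 by omega, g40, i31, hp4]
      omega
    have g42 : FD a n X (2 * t + 4) 2
        = 24 * bigA a n + (15 * t * bigA a n + 15 * bigA a n)
          + 3 * ((∑ i ∈ Finset.Icc 1 t, epsD a X i) + epsD a X (t + 1))
          + 3 * (5 * bigA a n + epsD a X (t + 2)) := by
      rw [FD_eqs a n X (2 * t + 4) 2 (by omega) (by omega),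
        show (2:ℕ) - 1 = 1 by omega,
        show 2 * t + 4 - 1 = 2 * t + 3 by omega, g41, i32, hp4]
      omega
    have g50 : FD a n X (2 * t + 5) 0
        = 32 * bigA a n + (15 * t * bigA a n + 15 * bigA a n)
          + 3 * ((∑ i ∈ Finset.Icc 1 t, delD a X i) + delD a X (t + 1))
          + 1 * (5 * bigA a n + delD a X (t + 2)) := by
      rw [FD_eq0 a n X (2 * t + 5) (by omega),
        show 2 * t + 5 - 2 = 2 * t + 3 by omega,
        show 2 * t + 5 - 1 = 2 * t + 4 by omega, i32, g40, hp5]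
      omega
    have g51 : FD a n X (2 * t + 5) 1
        = 32 * bigA a n + (15 * t * bigA a n + 15 * bigA a n)
          + 3 * ((∑ i ∈ Finset.Icc 1 t, delD a X i) + delD a X (t + 1))
          + 2 * (5 * bigA a n + delD a X (t + 2)) := by
      rw [FD_eqs a n X (2 * t + 5) 1 (by omega) (by omega),
        show (1:ℕ) - 1 = 0 by omega,
        show 2 * t + 5 - 1 = 2 * t + 4 by omega, g50, g41, hp5]
      omega
    have g52 : FD a n X (2 * t + 5) 2
        = 32 * bigA a n + (15 * t * bigA a n + 15 * bigA a n)
          + 3 * ((∑ i ∈ Finset.Icc 1 t, delD a X i) + delD a X (t + 1))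
          + 3 * (5 * bigA a n + delD a X (t + 2)) := by
      rw [FD_eqs a n X (2 * t + 5) 2 (by omega) (by omega),
        show (2:ℕ) - 1 = 1 by omega,
        show 2 * t + 5 - 1 = 2 * t + 4 by omega, g51, g42, hp5]
      omega
    rw [show 2 * (t + 1) + 2 = 2 * t + 4 by ring, show 2 * (t + 1) + 3 = 2 * t + 5 by ring,
      show 15 * (t + 1) * bigA a n = 15 * t * bigA a n + 15 * bigA a n by ring,
      Finset.sum_Icc_succ_top (by omega : 1 ≤ t + 1) (epsD a X),
      Finset.sum_Icc_succ_top (by omega : 1 ≤ t + 1) (delD a X),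
      show t + 1 + 1 = t + 2 by ring]
    refine ⟨?_, ?_, ?_, ?_, ?_, ?_⟩ <;> omega

lemma sum_eps_del_eq (a : ℕ → ℕ) (X : Finset ℕ) (k : ℕ) :
    (∑ i ∈ Finset.Icc 1 k, epsD a X i) + (∑ i ∈ Finset.Icc 1 k, delD a X i)
      = ∑ i ∈ Finset.Icc 1 k, a i := by
  rw [← Finset.sum_add_distrib]
  exact Finset.sum_congr rfl fun i _ => eps_add_del a X i

lemma sum_a_mono (a : ℕ → ℕ) (n k : ℕ) (hk : k ≤ n) :
    ∑ i ∈ Finset.Icc 1 k, a i ≤ ∑ i ∈ Finset.Icc 1 n, a i :=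
  Finset.sum_le_sum_of_subset (Finset.Icc_subset_Icc le_rfl hk)

lemma endE2 (a : ℕ → ℕ) (n : ℕ) (X : Finset ℕ) :
    FD a n X (2 * n) 2
      = 24 * bigA a n + 15 * n * bigA a n + 3 * (∑ i ∈ Finset.Icc 1 n, epsD a X i) := by
  rcases Nat.eq_zero_or_pos n with h0 | h1
  · subst h0; norm_num [F02]
  · obtain ⟨m, rfl⟩ : ∃ m, n = m + 1 := ⟨n - 1, by omega⟩
    have h := (mainF a (m + 1) X m (by omega)).2.2.1
    rw [show 2 * (m + 1) = 2 * m + 2 by ring, h,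
      Finset.sum_Icc_succ_top (by omega : 1 ≤ m + 1) (epsD a X),
      show 15 * (m + 1) * bigA a (m + 1) = 15 * m * bigA a (m + 1) + 15 * bigA a (m + 1) by ring]
    omega

lemma endO2 (a : ℕ → ℕ) (n : ℕ) (X : Finset ℕ) :
    FD a n X (2 * n + 1) 2
      = 32 * bigA a n + 15 * n * bigA a n + 3 * (∑ i ∈ Finset.Icc 1 n, delD a X i) := by
  rcases Nat.eq_zero_or_pos n with h0 | h1
  · subst h0; norm_num [F12]
  · obtain ⟨m, rfl⟩ : ∃ m, n = m + 1 := ⟨n - 1, by omega⟩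
    have h := (mainF a (m + 1) X m (by omega)).2.2.2.2.2
    rw [show 2 * (m + 1) + 1 = 2 * m + 3 by ring, h,
      Finset.sum_Icc_succ_top (by omega : 1 ≤ m + 1) (delD a X),
      show 15 * (m + 1) * bigA a (m + 1) = 15 * m * bigA a (m + 1) + 15 * bigA a (m + 1) by ring]
    omega

lemma endO0le (a : ℕ → ℕ) (n : ℕ) (X : Finset ℕ) :
    FD a n X (2 * n + 1) 0
      ≤ 24 * bigA a n + 15 * n * bigA a n + 3 * (∑ i ∈ Finset.Icc 1 n, epsD a X i) := by
  have hA : bigA a n = 6 * ∑ i ∈ Finset.Icc 1 n, a i := rfl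
  rcases Nat.eq_zero_or_pos n with h0 | h1
  · subst h0; norm_num [F10]; omega
  · obtain ⟨m, rfl⟩ : ∃ m, n = m + 1 := ⟨n - 1, by omega⟩
    have h := (mainF a (m + 1) X m (by omega)).2.2.2.1
    rw [show 2 * (m + 1) + 1 = 2 * m + 3 by ring, h]
    have hsum := sum_eps_del a (m + 1) X (m + 1) le_rfl
    have hD : (∑ i ∈ Finset.Icc 1 (m + 1), delD a X i)
        = (∑ i ∈ Finset.Icc 1 m, delD a X i) + delD a X (m + 1) :=
      Finset.sum_Icc_succ_top (by omega) (delD a X)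
    rw [show 15 * (m + 1) * bigA a (m + 1) = 15 * m * bigA a (m + 1) + 15 * bigA a (m + 1) by ring]
    omega

lemma F2n2 (a : ℕ → ℕ) (n : ℕ) (X : Finset ℕ) :
    FD a n X (2 * n + 2) 0
      = 32 * bigA a n + 15 * n * bigA a n + 3 * (∑ i ∈ Finset.Icc 1 n, epsD a X i) := by
  rw [FD_eq0 a n X (2 * n + 2) (by omega), show 2 * n + 2 - 2 = 2 * n by omega,
    show 2 * n + 2 - 1 = 2 * n + 1 by omega, endE2, ptn2]
  have := endO0le a n X
  omega

lemma F2n3 (a : ℕ → ℕ) (n : ℕ) (X : Finset ℕ) :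
    FD a n X (2 * n + 3) 0
      = 40 * bigA a n + 15 * n * bigA a n
        + 3 * max (∑ i ∈ Finset.Icc 1 n, epsD a X i) (∑ i ∈ Finset.Icc 1 n, delD a X i) := by
  rw [FD_eq0 a n X (2 * n + 3) (by omega), show 2 * n + 3 - 2 = 2 * n + 1 by omega,
    show 2 * n + 3 - 1 = 2 * n + 2 by omega, endO2, F2n2, ptn3]
  omega

theorem balanced_packing_offsets (a : ℕ → ℕ) (n : ℕ)
    (X : Finset ℕ) (hX : X ⊆ Finset.Icc 1 n)
    (ha : ∀ i ∈ Finset.Icc 1 n, 0 < a i)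
    (hbal : ∑ i ∈ X, a i = ∑ i ∈ Finset.Icc 1 n \ X, a i)
    (k : ℕ) (hk : k ≤ n) :
    -- `j = 2k + 3` ranges over the odd values `3, 5, …, 2n+3`;
    -- `(j - 3)/2 = k`
    |offsetO a n X (2 * k + 3) - 8 * (bigA a n : ℤ)|
        ≤ 3 * ∑ i ∈ Finset.Icc 1 k, (a i : ℤ) ∧
      3 * ∑ i ∈ Finset.Icc 1 k, (a i : ℤ) ≤ (bigA a n : ℤ) / 2 := by
  have hA : bigA a n = 6 * ∑ i ∈ Finset.Icc 1 n, a i := rfl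
  have hcast : (∑ i ∈ Finset.Icc 1 k, (a i : ℤ))
      = ((∑ i ∈ Finset.Icc 1 k, a i : ℕ) : ℤ) := by push_cast; rfl
  have hmono := sum_a_mono a n k hk
  have hsumk := sum_eps_del_eq a X k
  have hFD2 : ∀ j, startTime (redLayers a n) (balancedPacking X n) 2 3 j 0
      = FD a n X j 0 - packTime (redLayers a n) (balancedPacking X n) j := fun _ => rfl
  refine ⟨?_, by rw [hcast]; omega⟩
  rcases Nat.lt_or_ge k n with hkn | hkn
  · obtain ⟨m20, -, -, m30, -, -⟩ := mainF a n X k hkn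
    have hpt2 := ptE a n X k hkn
    have hpt3 := ptO a n X k hkn
    have hs2 : startTime (redLayers a n) (balancedPacking X n) 2 3 (2 * k + 2) 0
        = 24 * bigA a n + 15 * k * bigA a n + 3 * (∑ i ∈ Finset.Icc 1 k, epsD a X i) := by
      rw [hFD2, m20, hpt2]; omega
    have hs3 : startTime (redLayers a n) (balancedPacking X n) 2 3 (2 * k + 3) 0
        = 32 * bigA a n + 15 * k * bigA a n + 3 * (∑ i ∈ Finset.Icc 1 k, delD a X i) := by
      rw [hFD2, m30, hpt3]; omega
    unfold offsetO
    rw [show 2 * k + 3 - 1 = 2 * k + 2 by omega, hs2, hs3, hcast, abs_le]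
    constructor <;> omega
  · have hkn' : k = n := le_antisymm hk hkn
    subst hkn'
    have hE : (∑ i ∈ Finset.Icc 1 k, epsD a X i) = ∑ i ∈ X, a i := by
      simp only [epsD]
      rw [Finset.sum_ite_mem, Finset.inter_eq_right.mpr hX]
    have hD : (∑ i ∈ Finset.Icc 1 k, delD a X i) = ∑ i ∈ Finset.Icc 1 k \ X, a i := by
      simp only [delD]
      rw [Finset.sdiff_eq_filter, Finset.sum_filter]
      exact Finset.sum_congr rfl fun i _ => by by_cases h : i ∈ X <;> simp [h]
    have hEDeq : (∑ i ∈ Finset.Icc 1 k, epsD a X i)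
        = (∑ i ∈ Finset.Icc 1 k, delD a X i) := by rw [hE, hD, hbal]
    have hs2 : startTime (redLayers a k) (balancedPacking X k) 2 3 (2 * k + 2) 0
        = 24 * bigA a k + 15 * k * bigA a k + 3 * (∑ i ∈ Finset.Icc 1 k, epsD a X i) := by
      rw [hFD2, F2n2, ptn2]; omega
    have hs3 : startTime (redLayers a k) (balancedPacking X k) 2 3 (2 * k + 3) 0
        = 32 * bigA a k + 15 * k * bigA a k + 3 * (∑ i ∈ Finset.Icc 1 k, epsD a X i) := by
      rw [hFD2, F2n3, ptn3]; omega
    unfold offsetO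
    rw [show 2 * k + 3 - 1 = 2 * k + 2 by omega, hs2, hs3, hcast, abs_le]
    constructor <;> omega

end Harmony
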